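/- Let k ≥ 1 and suppose that for each natural number n a function f_n : ℝ → ℝ is given by f_n(x) = α₁(x)·(λ₁(x))^n + α₂(x)·(λ₂(x))^n + ⋯ + α_k(x)·(λ_k(x))^n, where the α_i and λ_i are functions ℝ → ℝ that are differentiable at 1, with α₁(1) ≠ 0, λ₁(1) ≠ 0, and |λ₁(1)| > |λ_i(1)| for all i > 1. Then the sequence f_n'(1)/(n·f_n(1)) converges to λ₁'(1)/λ₁(1) as n → ∞ (in particular f_n(1) ≠ 0 for all sufficiently large n). -/

import Mathlib

open Filter


private lemma aux_div (x y n D : ℝ) (hD : D ≠ 0) : x/(n*D)/(y/D) = x/(n*y) := by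
  rcases eq_or_ne y 0 with rfl|hy
  · simp
  rcases eq_or_ne n 0 with rfl|hn
  · simp
  field_simp


/-- Suppose `f_n(x) = Σ_i α_i(x)·(λ_i(x))^n` where the `α_i`, `λ_i` are differentiable
at `1`, `α₁(1) ≠ 0`, `λ₁(1) ≠ 0`, and `|λ₁(1)| > |λ_i(1)|` for all `i > 1`. Then
`f_n'(1)/(n·f_n(1)) → λ₁'(1)/λ₁(1)` as `n → ∞`. -/
theorem tendsto_deriv_div_of_dominant {k : ℕ} (hk : 1 ≤ k)
    (α lam : Fin k → ℝ → ℝ) (f : ℕ → ℝ → ℝ)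
    (hα : ∀ i, DifferentiableAt ℝ (α i) 1)
    (hlam : ∀ i, DifferentiableAt ℝ (lam i) 1)
    (hf : ∀ n x, f n x = ∑ i : Fin k, α i x * (lam i x) ^ n)
    (hα0 : α ⟨0, hk⟩ 1 ≠ 0) (hlam0 : lam ⟨0, hk⟩ 1 ≠ 0)
    (hdom : ∀ i : Fin k, i ≠ ⟨0, hk⟩ → |lam i 1| < |lam ⟨0, hk⟩ 1|) :
    Tendsto (fun n : ℕ => deriv (f n) 1 / (n * f n 1)) atTop
      (nhds (deriv (lam ⟨0, hk⟩) 1 / lam ⟨0, hk⟩ 1)) := by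
  set i0 : Fin k := ⟨0, hk⟩ with hi0
  set A : ℝ := α i0 1 with hA
  set L : ℝ := lam i0 1 with hL
  have hD : ∀ n : ℕ, A * L ^ n ≠ 0 := fun n => mul_ne_zero hα0 (pow_ne_zero n hlam0)
  -- derivative formula
  have hderiv : ∀ n : ℕ, deriv (f n) 1
      = ∑ i : Fin k, (deriv (α i) 1 * lam i 1 ^ n
        + α i 1 * (↑n * lam i 1 ^ (n-1) * deriv (lam i) 1)) := by
    intro n
    have hfn : f n = fun x => ∑ i : Fin k, α i x * lam i x ^ n := funext (hf n)
    rw [hfn]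
    exact (HasDerivAt.fun_sum fun i _ =>
      ((hα i).hasDerivAt.mul (((hlam i).hasDerivAt).pow n))).deriv
  -- H tends to 1
  have hH : Tendsto (fun n : ℕ => f n 1 / (A * L ^ n)) atTop (nhds 1) := by
    have heq : ∀ n : ℕ, f n 1 / (A * L ^ n)
        = ∑ i : Fin k, (α i 1 / A) * (lam i 1 / L) ^ n := by
      intro n
      rw [hf, Finset.sum_div]
      exact Finset.sum_congr rfl fun i _ => by rw [div_pow, mul_div_mul_comm]
    have hlim : Tendsto (fun n : ℕ => ∑ i : Fin k, (α i 1 / A) * (lam i 1 / L) ^ n)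
        atTop (nhds (∑ i : Fin k, if i = i0 then (1:ℝ) else 0)) := by
      refine tendsto_finset_sum _ fun i _ => ?_
      by_cases h : i = i0
      · subst h
        simp only [if_pos rfl, div_self hlam0, one_pow, mul_one, div_self hα0]
        rw [if_pos trivial]
        refine (tendsto_const_nhds (x := (1:ℝ))).congr fun n => ?_
        show (1:ℝ) = A / A * (L / L) ^ n
        rw [div_self (show L ≠ 0 from hlam0), div_self (show A ≠ 0 from hα0), one_pow, mul_one]
      · simp only [if_neg h]
        have hr : |lam i 1 / L| < 1 := by
          rw [abs_div, div_lt_one (abs_pos.mpr hlam0)]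
          exact hdom i h
        simpa using (tendsto_pow_atTop_nhds_zero_of_abs_lt_one hr).const_mul (α i 1 / A)
    have : (∑ i : Fin k, if i = i0 then (1:ℝ) else 0) = 1 := by simp
    rw [this] at hlim
    exact hlim.congr fun n => (heq n).symm
  -- G tends to L'/L
  have hG : Tendsto (fun n : ℕ => deriv (f n) 1 / (↑n * (A * L ^ n))) atTop
      (nhds (deriv (lam i0) 1 / L)) := by
    have heq : ∀ n : ℕ, 1 ≤ n → deriv (f n) 1 / (↑n * (A * L ^ n))
        = ∑ i : Fin k, ((deriv (α i) 1 / A) * (1/(n:ℝ)) * (lam i 1 / L) ^ n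
          + (α i 1 * deriv (lam i) 1 / (A * L)) * (lam i 1 / L) ^ (n-1)) := by
      intro n hn
      obtain ⟨m, rfl⟩ : ∃ m, n = m + 1 := ⟨n - 1, (Nat.succ_pred_eq_of_pos hn).symm⟩
      rw [hderiv, Finset.sum_div]
      refine Finset.sum_congr rfl fun i _ => ?_
      have hn' : ((m:ℝ) + 1) ≠ 0 := by positivity
      simp only [Nat.add_sub_cancel]
      push_cast
      rw [div_pow, div_pow]
      field_simp
      ring
    have hlim : Tendsto (fun n : ℕ => ∑ i : Fin k,
        ((deriv (α i) 1 / A) * (1/(n:ℝ)) * (lam i 1 / L) ^ n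
          + (α i 1 * deriv (lam i) 1 / (A * L)) * (lam i 1 / L) ^ (n-1)))
        atTop (nhds (∑ i : Fin k, if i = i0 then deriv (lam i0) 1 / L else 0)) := by
      refine tendsto_finset_sum _ fun i _ => ?_
      by_cases h : i = i0
      · subst h
        simp only [if_pos rfl, div_self hlam0, one_pow, mul_one]
        have h1 : Tendsto (fun n : ℕ => deriv (α i0) 1 / A * (1/(n:ℝ))) atTop (nhds 0) := by
          simpa using tendsto_one_div_atTop_nhds_zero_nat.const_mul (deriv (α i0) 1 / A)
        have h2 : (α i0 1 * deriv (lam i0) 1 / (A * L)) = deriv (lam i0) 1 / L := by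
          show A * deriv (lam i0) 1 / (A * L) = deriv (lam i0) 1 / L
          rw [mul_div_mul_left _ _ hα0]
        have := h1.add (tendsto_const_nhds (x := α i0 1 * deriv (lam i0) 1 / (A * L))
          (f := atTop (α := ℕ)))
        rw [zero_add] at this
        have hLL : lam i0 1 / L = 1 := div_self hlam0
        simpa [h2, hLL] using this
      · simp only [if_neg h]
        have hr : |lam i 1 / L| < 1 := by
          rw [abs_div, div_lt_one (abs_pos.mpr hlam0)]
          exact hdom i h
        have hp := tendsto_pow_atTop_nhds_zero_of_abs_lt_one hr
        have h1 : Tendsto (fun n : ℕ => deriv (α i) 1 / A * (1/(n:ℝ)) * (lam i 1 / L) ^ n)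
            atTop (nhds 0) := by
          have := (tendsto_one_div_atTop_nhds_zero_nat.const_mul (deriv (α i) 1 / A)).mul hp
          simpa using this
        have h2 : Tendsto (fun n : ℕ => (α i 1 * deriv (lam i) 1 / (A * L))
            * (lam i 1 / L) ^ (n-1)) atTop (nhds 0) := by
          have hc : Tendsto (fun n : ℕ => (lam i 1 / L) ^ (n-1)) atTop (nhds 0) :=
            hp.comp (tendsto_sub_atTop_nat 1)
          simpa using hc.const_mul (α i 1 * deriv (lam i) 1 / (A * L))
        simpa using h1.add h2
    have hsum : (∑ i : Fin k, if i = i0 then deriv (lam i0) 1 / L else 0)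
        = deriv (lam i0) 1 / L := by simp
    rw [hsum] at hlim
    refine hlim.congr' ?_
    filter_upwards [eventually_ge_atTop 1] with n hn
    exact (heq n hn).symm
  -- combine
  have hcomb := hG.div hH one_ne_zero
  rw [div_one] at hcomb
  refine hcomb.congr fun n => ?_
  exact aux_div _ _ _ _ (hD n)
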